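/- Let (E, A) be a regular pair with Weierstrass form via P, Q as above, ν = ind(E,A), f ∈ C^ν([0,T], ℝⁿ), B = B̃Q^{−1}, C = C̃Q^{−1} with B̃, C̃ of the block form [B̃₁ B̃₂; 0 0], [C̃₁ C̃₂; 0 0], and d = (d₁, 0)ᵀ. If D̃ = B̃₁ + C̃₁ + C̃₁ J ∫₀ᵀ e^{(T−s)J} ds is invertible, then the boundary value problem Eẋ = Ax + f on (0,T), Bx(0) + Cx(T) = d, has the unique solution x(t) = Q(μ̃ + ũ(t)), where (μ̃, ũ) is given by the explicit formulas μ̃₁ = D̃^{−1}d̃, ũ₁(t) = ∫₀ᵗ e^{(t−s)J}ds·J D̃^{−1}d̃ + ∫₀ᵗ e^{(t−s)J} f̃₁(s)ds, μ̃₂ = −Σ_{i=0}^{ν−1} Nⁱ f̃₂^{(i)}(0), ũ₂(t) = −Σ_{i=0}^{ν−1} Nⁱ[f̃₂^{(i)}(t) − f̃₂^{(i)}(0)]. -/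

import Mathlib

open Matrix Set intervalIntegral MeasureTheory

/-- The matrix `∫₀ᵗ e^{(t−s)J} ds`, computed entrywise. -/
noncomputable def expInt {n : ℕ} (J : Matrix (Fin n) (Fin n) ℝ) (t : ℝ) :
    Matrix (Fin n) (Fin n) ℝ :=
  Matrix.of fun i j => ∫ s in (0:ℝ)..t, NormedSpace.exp ((t - s) • J) i j

section ExpHelpers

variable {n : ℕ} (J : Matrix (Fin n) (Fin n) ℝ)

noncomputable def entryLM (i j : Fin n) : Matrix (Fin n) (Fin n) ℝ →ₗ[ℝ] ℝ where
  toFun M := M i j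
  map_add' _ _ := rfl
  map_smul' _ _ := rfl

theorem expM_add (a b : ℝ) :
    NormedSpace.exp ((a + b) • J) = NormedSpace.exp (a • J) * NormedSpace.exp (b • J) := by
  rw [add_smul]
  exact Matrix.exp_add_of_commute _ _ (((Commute.refl J).smul_left a).smul_right b)

theorem expM_zero : NormedSpace.exp ((0:ℝ) • J) = 1 := by
  rw [zero_smul]; exact NormedSpace.exp_zero

theorem expM_mul_comm (t : ℝ) :
    J * NormedSpace.exp (t • J) = NormedSpace.exp (t • J) * J := by
  letI : SeminormedRing (Matrix (Fin n) (Fin n) ℝ) := Matrix.linftyOpSemiNormedRing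
  letI : NormedRing (Matrix (Fin n) (Fin n) ℝ) := Matrix.linftyOpNormedRing
  letI : NormedAlgebra ℝ (Matrix (Fin n) (Fin n) ℝ) := Matrix.linftyOpNormedAlgebra
  exact (((Commute.refl J).smul_right t).exp_right).eq

theorem expM_cancel (t : ℝ) :
    NormedSpace.exp (t • J) * NormedSpace.exp ((-t) • J) = 1 := by
  rw [← expM_add]; simp [expM_zero]

theorem hasDerivAt_expM_entry (t : ℝ) (i j : Fin n) :
    HasDerivAt (fun u : ℝ => NormedSpace.exp (u • J) i j)
      ((J * NormedSpace.exp (t • J)) i j) t := by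
  letI : NormedRing (Matrix (Fin n) (Fin n) ℝ) := Matrix.linftyOpNormedRing
  letI : NormedAlgebra ℝ (Matrix (Fin n) (Fin n) ℝ) := Matrix.linftyOpNormedAlgebra
  have h : HasDerivAt (fun u : ℝ => NormedSpace.exp (u • J))
      (J * NormedSpace.exp (t • J)) t := hasDerivAt_exp_smul_const' J t
  exact ((entryLM i j).toContinuousLinearMap.hasFDerivAt.comp_hasDerivAt t h)

theorem continuous_expM_entry (i j : Fin n) :
    Continuous fun u : ℝ => NormedSpace.exp (u • J) i j :=
  continuous_iff_continuousAt.2 fun t => (hasDerivAt_expM_entry J t i j).continuousAt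

/-- derivative of `s ↦ exp((t-s)•J) i j` -/
theorem hasDerivAt_expM_entry_shift (t s : ℝ) (i j : Fin n) :
    HasDerivAt (fun s : ℝ => NormedSpace.exp ((t - s) • J) i j)
      (-((NormedSpace.exp ((t - s) • J) * J) i j)) s := by
  have h1 : HasDerivAt (fun s : ℝ => t - s) (-1) s := by
    simpa using (hasDerivAt_id s).const_sub t
  have h2 := (hasDerivAt_expM_entry J (t - s) i j).comp s h1
  rw [expM_mul_comm] at h2
  have h3 : HasDerivAt (fun s : ℝ => NormedSpace.exp ((t - s) • J) i j) _ s := h2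
  simpa [mul_comm] using h3

theorem continuous_expM_entry_shift (t : ℝ) (i j : Fin n) :
    Continuous fun s : ℝ => NormedSpace.exp ((t - s) • J) i j :=
  (continuous_expM_entry J i j).comp (continuous_const.sub continuous_id)

end ExpHelpers

section VecHelpers

variable {k m : Type*} [Fintype k] [Fintype m]

theorem hasDerivWithinAt_matvec {M : ℝ → Matrix k m ℝ}
    {M' : Matrix k m ℝ} {c : ℝ → m → ℝ} {c' : m → ℝ} {s : Set ℝ} {t : ℝ}
    (hM : ∀ i j, HasDerivWithinAt (fun u => M u i j) (M' i j) s t)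
    (hc : HasDerivWithinAt c c' s t) :
    HasDerivWithinAt (fun u => M u *ᵥ c u) (M' *ᵥ c t + M t *ᵥ c') s t := by
  rw [hasDerivWithinAt_pi]
  intro i
  have h : HasDerivWithinAt (fun u => ∑ j : m, M u i j * c u j)
      (∑ j : m, (M' i j * c t j + M t i j * c' j)) s t :=
    HasDerivWithinAt.fun_sum fun j _ => (hM i j).mul ((hasDerivWithinAt_pi.1 hc) j)
  have h' : HasDerivWithinAt (fun u => (M u *ᵥ c u) i) _ s t := h
  refine h'.congr_deriv (Eq.symm ?_)
  show (M' *ᵥ c t) i + (M t *ᵥ c') i = _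
  simp only [Matrix.mulVec, dotProduct]
  exact Finset.sum_add_distrib.symm

theorem hasDerivWithinAt_const_matvec (K : Matrix k m ℝ)
    {c : ℝ → m → ℝ} {c' : m → ℝ} {s : Set ℝ} {t : ℝ}
    (hc : HasDerivWithinAt c c' s t) :
    HasDerivWithinAt (fun u => K *ᵥ c u) (K *ᵥ c') s t := by
  have := hasDerivWithinAt_matvec (M := fun _ => K) (M' := 0)
    (fun i j => hasDerivWithinAt_const t s (K i j)) hc
  simpa using this

theorem continuousOn_matvec {M : ℝ → Matrix k m ℝ} {c : ℝ → m → ℝ} {s : Set ℝ}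
    (hM : ∀ i j, ContinuousOn (fun u => M u i j) s) (hc : ContinuousOn c s) :
    ContinuousOn (fun u => M u *ᵥ c u) s := by
  apply continuousOn_pi.2
  intro i
  simp only [Matrix.mulVec, dotProduct]
  exact continuousOn_finset_sum _ fun j _ =>
    (hM i j).mul ((continuous_apply j).comp_continuousOn hc)

theorem intervalIntegral_apply' {g : ℝ → m → ℝ} {a b : ℝ}
    (hg : IntervalIntegrable g volume a b) (i : m) :
    (∫ s in a..b, g s) i = ∫ s in a..b, g s i :=
  (((ContinuousLinearMap.proj i : (m → ℝ) →L[ℝ] ℝ).intervalIntegral_comp_comm hg)).symm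

theorem matvec_intervalIntegral (K : Matrix k m ℝ) {g : ℝ → m → ℝ} {a b : ℝ}
    (hg : IntervalIntegrable g volume a b) :
    (∫ s in a..b, K *ᵥ g s) = K *ᵥ ∫ s in a..b, g s :=
  ((Matrix.mulVecLin K).toContinuousLinearMap.intervalIntegral_comp_comm hg)

end VecHelpers

section ExpIntHelpers

variable {n : ℕ} (J : Matrix (Fin n) (Fin n) ℝ)

theorem key_integral (t : ℝ) (i j : Fin n) :
    (∫ s in (0:ℝ)..t, (NormedSpace.exp ((t - s) • J) * J) i j)
      = (NormedSpace.exp (t • J) - 1) i j := by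
  have hcont : Continuous fun s : ℝ => (NormedSpace.exp ((t - s) • J) * J) i j := by
    simp only [Matrix.mul_apply]
    exact continuous_finset_sum _ fun k _ =>
      (continuous_expM_entry_shift J t i k).mul continuous_const
  have hd : ∀ s ∈ uIcc (0:ℝ) t,
      HasDerivAt (fun s : ℝ => -(NormedSpace.exp ((t - s) • J) i j))
        ((NormedSpace.exp ((t - s) • J) * J) i j) s := fun s _ => by
    simpa using (hasDerivAt_expM_entry_shift J t s i j).fun_neg
  have h := intervalIntegral.integral_eq_sub_of_hasDerivAt hd (hcont.intervalIntegrable _ _)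
  rw [h]
  simp only [sub_self, sub_zero, expM_zero, Matrix.sub_apply, Matrix.neg_apply]
  ring

theorem expInt_mul_eq (t : ℝ) :
    expInt J t * J = NormedSpace.exp (t • J) - 1 := by
  ext i j
  rw [← key_integral J t i j]
  simp only [Matrix.mul_apply, expInt, Matrix.of_apply]
  calc ∑ k, (∫ s in (0:ℝ)..t, NormedSpace.exp ((t - s) • J) i k) * J k j
      = ∑ k, ∫ s in (0:ℝ)..t, NormedSpace.exp ((t - s) • J) i k * J k j := by
        refine Finset.sum_congr rfl fun k _ => ?_
        rw [intervalIntegral.integral_mul_const]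
    _ = ∫ s in (0:ℝ)..t, ∑ k, NormedSpace.exp ((t - s) • J) i k * J k j := by
        rw [intervalIntegral.integral_finset_sum]
        exact fun k _ => ((continuous_expM_entry_shift J t i k).mul
          continuous_const).intervalIntegrable _ _
    _ = ∫ s in (0:ℝ)..t, (NormedSpace.exp ((t - s) • J) * J) i j := by
        refine intervalIntegral.integral_congr fun s _ => ?_
        rw [Matrix.mul_apply]

theorem mul_expInt_eq (t : ℝ) :
    J * expInt J t = NormedSpace.exp (t • J) - 1 := by
  ext i j
  rw [← key_integral J t i j]
  simp only [Matrix.mul_apply, expInt, Matrix.of_apply]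
  calc ∑ k, J i k * ∫ s in (0:ℝ)..t, NormedSpace.exp ((t - s) • J) k j
      = ∑ k, ∫ s in (0:ℝ)..t, J i k * NormedSpace.exp ((t - s) • J) k j := by
        refine Finset.sum_congr rfl fun k _ => ?_
        rw [intervalIntegral.integral_const_mul]
    _ = ∫ s in (0:ℝ)..t, ∑ k, J i k * NormedSpace.exp ((t - s) • J) k j := by
        rw [intervalIntegral.integral_finset_sum]
        exact fun k _ => (continuous_const.mul
          (continuous_expM_entry_shift J t k j)).intervalIntegrable _ _
    _ = ∫ s in (0:ℝ)..t, (NormedSpace.exp ((t - s) • J) * J) i j := by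
        refine intervalIntegral.integral_congr fun s _ => ?_
        rw [show (∑ k, J i k * NormedSpace.exp ((t - s) • J) k j)
            = (J * NormedSpace.exp ((t - s) • J)) i j from (Matrix.mul_apply).symm,
          expM_mul_comm]

theorem expInt_mulVec (t : ℝ) (w : Fin n → ℝ) :
    expInt J t *ᵥ (J *ᵥ w) = NormedSpace.exp (t • J) *ᵥ w - w := by
  rw [Matrix.mulVec_mulVec, expInt_mul_eq, Matrix.sub_mulVec, Matrix.one_mulVec]

end ExpIntHelpers

section Duhamel

variable {n : ℕ} (J : Matrix (Fin n) (Fin n) ℝ) (g : ℝ → Fin n → ℝ) (μ : Fin n → ℝ)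

noncomputable def Wfun (t : ℝ) : Fin n → ℝ :=
  ∫ s in (0:ℝ)..t, NormedSpace.exp ((0 - s) • J) *ᵥ g s

noncomputable def Yfun (t : ℝ) : Fin n → ℝ :=
  NormedSpace.exp (t • J) *ᵥ (μ + Wfun J g t)

theorem continuous_integrandW (hg : Continuous g) :
    Continuous fun s : ℝ => NormedSpace.exp ((0 - s) • J) *ᵥ g s := by
  rw [← continuousOn_univ]
  exact continuousOn_matvec (fun i j => (continuous_expM_entry_shift J 0 i j).continuousOn)
    hg.continuousOn

theorem hasDerivAt_W (hg : Continuous g) (t : ℝ) :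
    HasDerivAt (Wfun J g) (NormedSpace.exp ((0 - t) • J) *ᵥ g t) t :=
  intervalIntegral.integral_hasDerivAt_right
    ((continuous_integrandW J g hg).intervalIntegrable _ _)
    ((continuous_integrandW J g hg).stronglyMeasurable.stronglyMeasurableAtFilter)
    (continuous_integrandW J g hg).continuousAt

theorem hasDerivAt_Y (hg : Continuous g) (t : ℝ) :
    HasDerivAt (Yfun J g μ) (J *ᵥ Yfun J g μ t + g t) t := by
  have hM : ∀ i j, HasDerivWithinAt (fun u : ℝ => NormedSpace.exp (u • J) i j)
      ((J * NormedSpace.exp (t • J)) i j) univ t :=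
    fun i j => (hasDerivAt_expM_entry J t i j).hasDerivWithinAt
  have hc : HasDerivWithinAt (fun u => μ + Wfun J g u)
      (NormedSpace.exp ((0 - t) • J) *ᵥ g t) univ t :=
    ((hasDerivAt_W J g hg t).const_add μ).hasDerivWithinAt
  have h := hasDerivWithinAt_matvec hM hc
  rw [← hasDerivWithinAt_univ]
  have h' : HasDerivWithinAt (Yfun J g μ) _ univ t := h
  refine h'.congr_deriv (Eq.symm ?_)
  rw [Matrix.mulVec_mulVec, ← expM_add]
  have ht : t + (0 - t) = 0 := by ring
  rw [ht, expM_zero, Matrix.one_mulVec, ← Matrix.mulVec_mulVec]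
  rfl

theorem continuous_Y (hg : Continuous g) : Continuous (Yfun J g μ) :=
  continuous_iff_continuousAt.2 fun t => (hasDerivAt_Y J g μ hg t).continuousAt

theorem Yfun_zero : Yfun J g μ 0 = μ := by
  simp [Yfun, Wfun, expM_zero, Matrix.one_mulVec]

theorem Yfun_eq (hg : Continuous g) (t : ℝ) :
    Yfun J g μ t = NormedSpace.exp (t • J) *ᵥ μ
      + ∫ s in (0:ℝ)..t, NormedSpace.exp ((t - s) • J) *ᵥ g s := by
  rw [Yfun, Matrix.mulVec_add]
  congr 1
  rw [Wfun, ← matvec_intervalIntegral _ ((continuous_integrandW J g hg).intervalIntegrable _ _)]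
  refine (intervalIntegral.integral_congr fun s _ => ?_).symm
  rw [Matrix.mulVec_mulVec, ← expM_add]
  have : t + (0 - s) = t - s := by ring
  rw [this]

theorem linear_ode_unique {g : ℝ → Fin n → ℝ} {T : ℝ}
    {y z : ℝ → Fin n → ℝ}
    (hyc : ContinuousOn y (Icc 0 T))
    (hy : ∀ t ∈ Ico (0:ℝ) T, HasDerivWithinAt y (J *ᵥ y t + g t) (Ici t) t)
    (hzc : ContinuousOn z (Icc 0 T))
    (hz : ∀ t ∈ Ico (0:ℝ) T, HasDerivWithinAt z (J *ᵥ z t + g t) (Ici t) t)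
    (h0 : y 0 = z 0) : EqOn y z (Icc 0 T) := by
  set L := (Matrix.mulVecLin J).toContinuousLinearMap with hL
  have hv : ∀ t : ℝ, LipschitzOnWith ‖L‖₊ (fun w => J *ᵥ w + g t)
      (univ : Set (Fin n → ℝ)) := by
    intro t
    apply LipschitzWith.lipschitzOnWith
    apply LipschitzWith.of_dist_le_mul
    intro a b
    rw [dist_add_right]
    exact L.lipschitz.dist_le_mul a b
  exact ODE_solution_unique_of_mem_Icc_right (fun t _ => hv t) hyc hy (fun _ _ => trivial) hzc hz
    (fun _ _ => trivial) h0

end Duhamel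

section Misc

theorem mulVec_inj {k : Type*} [Fintype k] [DecidableEq k] {M : Matrix k k ℝ}
    (hM : IsUnit M.det) {a b : k → ℝ} (h : M *ᵥ a = M *ᵥ b) : a = b := by
  have h2 := congrArg (fun w => M⁻¹ *ᵥ w) h
  simpa [Matrix.mulVec_mulVec, Matrix.nonsing_inv_mul _ hM, Matrix.one_mulVec] using h2

theorem matvec_sum {k m : Type*} [Fintype k] [Fintype m] {ι : Type*} (s : Finset ι)
    (M : Matrix k m ℝ) (w : ι → m → ℝ) : M *ᵥ ∑ i ∈ s, w i = ∑ i ∈ s, M *ᵥ w i :=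
  map_sum (Matrix.mulVecLin M) w s

end Misc

section IterDeriv

variable {m : ℕ} {T : ℝ} {g : ℝ → Fin m → ℝ} {ν : ℕ}

theorem iterDeriv_hasDeriv (hT : 0 < T) (hg : ContDiffOn ℝ (ν : ℕ∞) g (Icc 0 T))
    {i : ℕ} (hi : i < ν) {t : ℝ} (ht : t ∈ Icc 0 T) :
    HasDerivWithinAt (iteratedDerivWithin i g (Icc 0 T))
      (iteratedDerivWithin (i+1) g (Icc 0 T) t) (Icc 0 T) t := by
  have hu := uniqueDiffOn_Icc hT
  have hd : DifferentiableOn ℝ (iteratedDerivWithin i g (Icc 0 T)) (Icc 0 T) :=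
    hg.differentiableOn_iteratedDerivWithin (by exact_mod_cast hi) hu
  have h := (hd t ht).hasDerivWithinAt
  rwa [← iteratedDerivWithin_succ] at h

theorem iterDeriv_cont (hT : 0 < T) (hg : ContDiffOn ℝ (ν : ℕ∞) g (Icc 0 T))
    {i : ℕ} (hi : i ≤ ν) :
    ContinuousOn (iteratedDerivWithin i g (Icc 0 T)) (Icc 0 T) :=
  hg.continuousOn_iteratedDerivWithin (by exact_mod_cast hi) (uniqueDiffOn_Icc hT)

end IterDeriv

section Nilpotent

variable {m : ℕ}

theorem nilp_sum_step {ν : ℕ} (N : Matrix (Fin m) (Fin m) ℝ) (hN : N ^ ν = 0)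
    (w : ℕ → Fin m → ℝ) :
    N *ᵥ (-∑ i ∈ Finset.range ν, N ^ i *ᵥ w (i+1))
      = (-∑ i ∈ Finset.range ν, N ^ i *ᵥ w i) + w 0 := by
  rw [Matrix.mulVec_neg, matvec_sum]
  have h1 : ∀ i ∈ Finset.range ν, N *ᵥ (N ^ i *ᵥ w (i+1)) = N ^ (i+1) *ᵥ w (i+1) := by
    intro i _
    rw [Matrix.mulVec_mulVec, ← pow_succ']
  rw [Finset.sum_congr rfl h1]
  have h2 : ∑ i ∈ Finset.range (ν+1), N ^ i *ᵥ w i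
      = (∑ i ∈ Finset.range ν, N ^ (i+1) *ᵥ w (i+1)) + N ^ 0 *ᵥ w 0 :=
    Finset.sum_range_succ' _ _
  have h3 : ∑ i ∈ Finset.range (ν+1), N ^ i *ᵥ w i
      = ∑ i ∈ Finset.range ν, N ^ i *ᵥ w i := by
    rw [Finset.sum_range_succ, hN, Matrix.zero_mulVec, add_zero]
  rw [← h3] at *
  have h4 : ∑ i ∈ Finset.range ν, N ^ (i+1) *ᵥ w (i+1)
      = (∑ i ∈ Finset.range (ν+1), N ^ i *ᵥ w i) - N ^ 0 *ᵥ w 0 := by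
    rw [h2]; ring
  rw [h4, h3, pow_zero, Matrix.one_mulVec]
  abel

theorem nilp_unique {ν : ℕ} (N : Matrix (Fin m) (Fin m) ℝ) (hN : N ^ ν = 0)
    {T : ℝ} (hT : 0 < T) {g : ℝ → Fin m → ℝ} (hg : ContDiffOn ℝ (ν : ℕ∞) g (Icc 0 T))
    {y y' : ℝ → Fin m → ℝ}
    (hy : ∀ t ∈ Icc (0:ℝ) T, HasDerivWithinAt y (y' t) (Icc 0 T) t)
    (hode : ∀ t ∈ Ioo (0:ℝ) T, N *ᵥ y' t = y t + g t) :
    ∀ t ∈ Icc (0:ℝ) T,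
      y t = -∑ i ∈ Finset.range ν, N ^ i *ᵥ iteratedDerivWithin i g (Icc 0 T) t := by
  have hyc : ContinuousOn y (Icc 0 T) := fun t ht => (hy t ht).continuousWithinAt
  have key : ∀ k : ℕ, k ≤ ν → ∀ t ∈ Ioo (0:ℝ) T,
      N ^ (ν - k) *ᵥ y t
        = -∑ i ∈ Finset.range k, N ^ (ν - k + i) *ᵥ iteratedDerivWithin i g (Icc 0 T) t := by
    intro k
    induction k with
    | zero => intro _ t _; simp [hN]
    | succ k ih =>
      intro hk t ht
      have hk' : k ≤ ν := Nat.le_of_succ_le hk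
      have hmk : ν - k = (ν - (k+1)) + 1 := by omega
      set m' := ν - (k + 1) with hm'
      have ht' : t ∈ Icc (0:ℝ) T := Ioo_subset_Icc_self ht
      -- two descriptions of the same function on Ioo
      have hFG : ∀ u ∈ Ioo (0:ℝ) T, N ^ (m'+1) *ᵥ y u
          = -∑ i ∈ Finset.range k, N ^ (m'+1+i) *ᵥ iteratedDerivWithin i g (Icc 0 T) u := by
        intro u hu
        have := ih hk' u hu
        rw [hmk] at this
        exact this
      -- derivative of LHS within Ioo
      have h1 : HasDerivWithinAt (fun u => N ^ (m'+1) *ᵥ y u) (N ^ (m'+1) *ᵥ y' t)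
          (Ioo 0 T) t :=
        hasDerivWithinAt_const_matvec _ ((hy t ht').mono Ioo_subset_Icc_self)
      -- derivative of RHS within Ioo
      have h2 : HasDerivWithinAt
          (fun u => -∑ i ∈ Finset.range k, N ^ (m'+1+i) *ᵥ iteratedDerivWithin i g (Icc 0 T) u)
          (-∑ i ∈ Finset.range k, N ^ (m'+1+i) *ᵥ iteratedDerivWithin (i+1) g (Icc 0 T) t)
          (Ioo 0 T) t := by
        apply HasDerivWithinAt.neg
        apply HasDerivWithinAt.fun_sum
        intro i hi
        have hiν : i < ν := by
          have := Finset.mem_range.1 hi; omega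
        exact hasDerivWithinAt_const_matvec _
          ((iterDeriv_hasDeriv hT hg hiν ht').mono Ioo_subset_Icc_self)
      have h1' : HasDerivWithinAt (fun u => N ^ (m'+1) *ᵥ y u)
          (-∑ i ∈ Finset.range k, N ^ (m'+1+i) *ᵥ iteratedDerivWithin (i+1) g (Icc 0 T) t)
          (Ioo 0 T) t :=
        h2.congr hFG (hFG t ht)
      have hud : UniqueDiffWithinAt ℝ (Ioo (0:ℝ) T) t := isOpen_Ioo.uniqueDiffWithinAt ht
      have heq : N ^ (m'+1) *ᵥ y' t
          = -∑ i ∈ Finset.range k, N ^ (m'+1+i) *ᵥ iteratedDerivWithin (i+1) g (Icc 0 T) t := by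
        rw [← h1.derivWithin hud, h1'.derivWithin hud]
      -- now use the equation
      have hyt : y t = N *ᵥ y' t - g t := eq_sub_of_add_eq (hode t ht).symm
      have hsum : ∑ i ∈ Finset.range (k+1), N ^ (m'+i) *ᵥ iteratedDerivWithin i g (Icc 0 T) t
          = (∑ i ∈ Finset.range k, N ^ (m'+1+i) *ᵥ iteratedDerivWithin (i+1) g (Icc 0 T) t)
            + N ^ m' *ᵥ g t := by
        rw [Finset.sum_range_succ'
          (fun i => N ^ (m'+i) *ᵥ iteratedDerivWithin i g (Icc 0 T) t) k]
        congr 1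
        refine Finset.sum_congr rfl fun i _ => ?_
        rw [show m' + (i+1) = m'+1+i from by omega]
      calc N ^ m' *ᵥ y t
          = N ^ m' *ᵥ (N *ᵥ y' t) - N ^ m' *ᵥ g t := by rw [hyt, Matrix.mulVec_sub]
        _ = N ^ (m'+1) *ᵥ y' t - N ^ m' *ᵥ g t := by rw [Matrix.mulVec_mulVec, ← pow_succ]
        _ = (-∑ i ∈ Finset.range k, N ^ (m'+1+i) *ᵥ iteratedDerivWithin (i+1) g (Icc 0 T) t)
              - N ^ m' *ᵥ g t := by rw [heq]
        _ = -∑ i ∈ Finset.range (k+1), N ^ (m'+i) *ᵥ iteratedDerivWithin i g (Icc 0 T) t := by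
              rw [hsum]; abel
  have hRc : ContinuousOn (fun t => -∑ i ∈ Finset.range ν,
      N ^ i *ᵥ iteratedDerivWithin i g (Icc 0 T) t) (Icc 0 T) := by
    apply ContinuousOn.neg
    apply continuousOn_finset_sum
    intro i hi
    have hiν : i ≤ ν := le_of_lt (Finset.mem_range.1 hi)
    exact continuousOn_matvec (fun a b => continuousOn_const) (iterDeriv_cont hT hg hiν)
  have hIoo : ∀ t ∈ Ioo (0:ℝ) T,
      y t = -∑ i ∈ Finset.range ν, N ^ i *ᵥ iteratedDerivWithin i g (Icc 0 T) t := by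
    intro t ht
    have h := key ν le_rfl t ht
    simpa [Nat.sub_self] using h
  exact fun t ht => EqOn.of_subset_closure (fun u hu => hIoo u hu) hyc hRc
    Ioo_subset_Icc_self (le_of_eq (closure_Ioo hT.ne).symm) ht

end Nilpotent

set_option maxHeartbeats 1000000 in
/-- unique solvability of the original BVP `Eẋ = Ax + f`,
`Bx(0)+Cx(T)=d`, with explicit solution `x(t) = Q(μ̃ + ũ(t))` obtained from
the Weierstrass canonical form, provided `D̃` is invertible. -/
theorem stmt_13 {n₁ n₂ : ℕ}
    (E A P Q : Matrix (Fin n₁ ⊕ Fin n₂) (Fin n₁ ⊕ Fin n₂) ℝ)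
    (hreg : ∃ l : ℂ, (l • E.map Complex.ofReal - A.map Complex.ofReal).det ≠ 0)
    (hP : IsUnit P.det) (hQ : IsUnit Q.det)
    (N : Matrix (Fin n₂) (Fin n₂) ℝ) (J : Matrix (Fin n₁) (Fin n₁) ℝ)
    (hE : P * E * Q = Matrix.fromBlocks 1 0 0 N)
    (hA : P * A * Q = Matrix.fromBlocks J 0 0 1)
    (ν : ℕ) (hν : ν ≠ 0) (hN : N ^ ν = 0) (hN' : N ^ (ν - 1) ≠ 0)
    (T : ℝ) (hT : 0 < T)
    (f : ℝ → (Fin n₁ ⊕ Fin n₂) → ℝ) (hf : ContDiffOn ℝ (ν : ℕ∞) f (Icc 0 T))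
    (f₁ : ℝ → Fin n₁ → ℝ) (hf₁ : f₁ = fun t i => (P *ᵥ f t) (Sum.inl i))
    (f₂ : ℝ → Fin n₂ → ℝ) (hf₂ : f₂ = fun t j => (P *ᵥ f t) (Sum.inr j))
    (B₁ C₁ : Matrix (Fin n₁) (Fin n₁) ℝ) (B₂ C₂ : Matrix (Fin n₁) (Fin n₂) ℝ)
    (B C : Matrix (Fin n₁ ⊕ Fin n₂) (Fin n₁ ⊕ Fin n₂) ℝ)
    (hB : B = Matrix.fromBlocks B₁ B₂ 0 0 * Q⁻¹)
    (hC : C = Matrix.fromBlocks C₁ C₂ 0 0 * Q⁻¹)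
    (d₁ : Fin n₁ → ℝ) (d : (Fin n₁ ⊕ Fin n₂) → ℝ) (hd : d = Sum.elim d₁ 0)
    (D : Matrix (Fin n₁) (Fin n₁) ℝ) (hD : D = B₁ + C₁ + C₁ * J * expInt J T)
    (hDinv : IsUnit D)
    (dt : Fin n₁ → ℝ)
    (hdt : dt = d₁ - C₁ *ᵥ (∫ s in (0:ℝ)..T, NormedSpace.exp ((T - s) • J) *ᵥ f₁ s)
        + B₂ *ᵥ ∑ i ∈ Finset.range ν, N ^ i *ᵥ iteratedDerivWithin i f₂ (Icc 0 T) 0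
        + C₂ *ᵥ ∑ i ∈ Finset.range ν, N ^ i *ᵥ iteratedDerivWithin i f₂ (Icc 0 T) T)
    (μt : (Fin n₁ ⊕ Fin n₂) → ℝ)
    (hμt : μt = Sum.elim (D⁻¹ *ᵥ dt)
        (-∑ i ∈ Finset.range ν, N ^ i *ᵥ iteratedDerivWithin i f₂ (Icc 0 T) 0))
    (ut : ℝ → (Fin n₁ ⊕ Fin n₂) → ℝ)
    (hut : ut = fun t => Sum.elim
        (expInt J t *ᵥ (J *ᵥ (D⁻¹ *ᵥ dt)) +
          ∫ s in (0:ℝ)..t, NormedSpace.exp ((t - s) • J) *ᵥ f₁ s)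
        (-∑ i ∈ Finset.range ν, N ^ i *ᵥ (iteratedDerivWithin i f₂ (Icc 0 T) t
            - iteratedDerivWithin i f₂ (Icc 0 T) 0)))
    (xsol : ℝ → (Fin n₁ ⊕ Fin n₂) → ℝ) (hxsol : xsol = fun t => Q *ᵥ (μt + ut t)) :
    -- xsol is a C¹ solution of the BVP
    ((∃ v : ℝ → (Fin n₁ ⊕ Fin n₂) → ℝ, ContinuousOn v (Icc 0 T) ∧
        (∀ t ∈ Icc 0 T, HasDerivWithinAt xsol (v t) (Icc 0 T) t) ∧
        (∀ t ∈ Ioo 0 T, E *ᵥ v t = A *ᵥ xsol t + f t)) ∧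
      B *ᵥ xsol 0 + C *ᵥ xsol T = d) ∧
    -- and every C¹ solution of the BVP coincides with it on [0,T]
    (∀ x x' : ℝ → (Fin n₁ ⊕ Fin n₂) → ℝ,
      (∀ t ∈ Icc 0 T, HasDerivWithinAt x (x' t) (Icc 0 T) t) →
      ContinuousOn x' (Icc 0 T) →
      (∀ t ∈ Ioo 0 T, E *ᵥ x' t = A *ᵥ x t + f t) →
      B *ᵥ x 0 + C *ᵥ x T = d →
      ∀ t ∈ Icc 0 T, x t = xsol t) := by
  clear hreg hN'
  -- basic matrix facts
  have hQQ : Q * Q⁻¹ = 1 := Matrix.mul_nonsing_inv Q hQ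
  have hQQ' : Q⁻¹ * Q = 1 := Matrix.nonsing_inv_mul Q hQ
  have hDdet : IsUnit D.det := (Matrix.isUnit_iff_isUnit_det D).1 hDinv
  have hDD : D * D⁻¹ = 1 := Matrix.mul_nonsing_inv D hDdet
  have hPE : P * E = Matrix.fromBlocks 1 0 0 N * Q⁻¹ := by
    calc P * E = (P * E * Q) * Q⁻¹ := by rw [Matrix.mul_assoc, hQQ, Matrix.mul_one]
      _ = _ := by rw [hE]
  have hPA : P * A = Matrix.fromBlocks J 0 0 1 * Q⁻¹ := by
    calc P * A = (P * A * Q) * Q⁻¹ := by rw [Matrix.mul_assoc, hQQ, Matrix.mul_one]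
      _ = _ := by rw [hA]
  have hcollapse : ∀ (W : Matrix (Fin n₁ ⊕ Fin n₂) (Fin n₁ ⊕ Fin n₂) ℝ)
      (w : (Fin n₁ ⊕ Fin n₂) → ℝ), (W * Q⁻¹) *ᵥ (Q *ᵥ w) = W *ᵥ w := by
    intro W w
    rw [Matrix.mulVec_mulVec, Matrix.mul_assoc, hQQ', Matrix.mul_one]
  have hPf : ∀ t, P *ᵥ f t = Sum.elim (f₁ t) (f₂ t) := by
    intro t; funext z
    cases z <;> simp [hf₁, hf₂]
  -- regularity of the pieces
  have hfc : ContinuousOn f (Icc 0 T) := hf.continuousOn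
  have hf₁c : ContinuousOn f₁ (Icc 0 T) := by
    rw [hf₁]
    apply continuousOn_pi.2
    intro i
    simp only [Matrix.mulVec, dotProduct]
    exact continuousOn_finset_sum _ fun k _ =>
      continuousOn_const.mul ((continuous_apply k).comp_continuousOn hfc)
  have hf₂c : ContDiffOn ℝ (ν : ℕ∞) f₂ (Icc 0 T) := by
    rw [hf₂]
    let L : ((Fin n₁ ⊕ Fin n₂) → ℝ) →ₗ[ℝ] (Fin n₂ → ℝ) :=
      { toFun := fun w => fun j => (P *ᵥ w) (Sum.inr j)
        map_add' := fun a b => by funext j; simp [Matrix.mulVec_add]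
        map_smul' := fun c a => by funext j; simp [Matrix.mulVec_smul] }
    exact L.toContinuousLinearMap.contDiff.comp_contDiffOn hf
  -- abbreviations
  set μ₁ : Fin n₁ → ℝ := D⁻¹ *ᵥ dt with hμ₁def
  set S₀ : Fin n₂ → ℝ :=
    ∑ i ∈ Finset.range ν, N ^ i *ᵥ iteratedDerivWithin i f₂ (Icc 0 T) 0 with hS₀def
  set ST : Fin n₂ → ℝ :=
    ∑ i ∈ Finset.range ν, N ^ i *ᵥ iteratedDerivWithin i f₂ (Icc 0 T) T with hSTdef
  set If : Fin n₁ → ℝ :=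
    ∫ s in (0:ℝ)..T, NormedSpace.exp ((T - s) • J) *ᵥ f₁ s with hIfdef
  -- continuous extension of f₁
  set cl : ℝ → ℝ := fun t => max 0 (min t T) with hcldef
  have hclcont : Continuous cl := continuous_const.max (continuous_id.min continuous_const)
  have hclmem : ∀ t, cl t ∈ Icc (0:ℝ) T := by
    intro t
    constructor
    · exact le_max_left _ _
    · exact max_le hT.le (min_le_right _ _)
  have hclid : ∀ t ∈ Icc (0:ℝ) T, cl t = t := by
    intro t ht
    rw [hcldef]
    simp only [min_eq_left ht.2, max_eq_right ht.1]
  set g₁ : ℝ → Fin n₁ → ℝ := fun t => f₁ (cl t) with hg₁def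
  have hg₁c : Continuous g₁ := hf₁c.comp_continuous hclcont hclmem
  have hg₁eq : ∀ t ∈ Icc (0:ℝ) T, g₁ t = f₁ t := by
    intro t ht; rw [hg₁def]; simp only [hclid t ht]
  have hIcongr : ∀ t ∈ Icc (0:ℝ) T,
      (∫ s in (0:ℝ)..t, NormedSpace.exp ((t - s) • J) *ᵥ f₁ s)
        = ∫ s in (0:ℝ)..t, NormedSpace.exp ((t - s) • J) *ᵥ g₁ s := by
    intro t ht
    refine intervalIntegral.integral_congr fun s hs => ?_
    rw [uIcc_of_le ht.1] at hs
    rw [hg₁eq s ⟨hs.1, hs.2.trans ht.2⟩]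
  -- the two block solutions
  set Y₂ : ℝ → Fin n₂ → ℝ :=
    fun t => -∑ i ∈ Finset.range ν, N ^ i *ᵥ iteratedDerivWithin i f₂ (Icc 0 T) t with hY₂def
  have hY₂0 : Y₂ 0 = -S₀ := by rw [hY₂def]
  have hY₂T : Y₂ T = -ST := by rw [hY₂def]
  -- solution formula matches
  have hsol_eq : ∀ t ∈ Icc (0:ℝ) T, μt + ut t = Sum.elim (Yfun J g₁ μ₁ t) (Y₂ t) := by
    intro t ht
    have h1 : μ₁ + (expInt J t *ᵥ (J *ᵥ μ₁)
        + ∫ s in (0:ℝ)..t, NormedSpace.exp ((t - s) • J) *ᵥ f₁ s) = Yfun J g₁ μ₁ t := by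
      rw [hIcongr t ht, expInt_mulVec, Yfun_eq J g₁ μ₁ hg₁c t]
      abel
    have h2 : (-S₀) + (-∑ i ∈ Finset.range ν, N ^ i *ᵥ (iteratedDerivWithin i f₂ (Icc 0 T) t
        - iteratedDerivWithin i f₂ (Icc 0 T) 0)) = Y₂ t := by
      rw [hY₂def, hS₀def]
      simp only [Matrix.mulVec_sub, Finset.sum_sub_distrib]
      abel
    funext z
    cases z with
    | inl i =>
      have h := congrFun h1 i
      simp only [hμt, hut, Pi.add_apply, Sum.elim_inl, Pi.neg_apply] at h ⊢
      simpa using h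
    | inr j =>
      have h := congrFun h2 j
      simp only [hμt, hut, Pi.add_apply, Sum.elim_inr, Pi.neg_apply] at h ⊢
      simpa using h
  have hY₂cont : ContinuousOn Y₂ (Icc 0 T) := by
    rw [hY₂def]
    apply ContinuousOn.neg
    apply continuousOn_finset_sum
    intro i hi
    exact continuousOn_matvec (fun a b => continuousOn_const)
      (iterDeriv_cont hT hf₂c (le_of_lt (Finset.mem_range.1 hi)))
  set Y₂' : ℝ → Fin n₂ → ℝ :=
    fun t => -∑ i ∈ Finset.range ν, N ^ i *ᵥ iteratedDerivWithin (i+1) f₂ (Icc 0 T) t with hY₂'def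
  have hY₂deriv : ∀ t ∈ Icc (0:ℝ) T, HasDerivWithinAt Y₂ (Y₂' t) (Icc 0 T) t := by
    intro t ht
    rw [hY₂def, hY₂'def]
    apply HasDerivWithinAt.neg
    apply HasDerivWithinAt.fun_sum
    intro i hi
    exact hasDerivWithinAt_const_matvec _
      (iterDeriv_hasDeriv hT hf₂c (Finset.mem_range.1 hi) ht)
  -- boundary-value computation
  have hBC : ∀ a : Fin n₁ → ℝ,
      B *ᵥ (Q *ᵥ Sum.elim a (-S₀)) + C *ᵥ (Q *ᵥ Sum.elim
        (NormedSpace.exp (T • J) *ᵥ a + If) (-ST))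
      = Sum.elim (D *ᵥ a + (d₁ - dt)) 0 := by
    intro a
    have hBQ : ∀ w, B *ᵥ (Q *ᵥ w) = Matrix.fromBlocks B₁ B₂ 0 0 *ᵥ w := by
      intro w; rw [hB]; exact hcollapse _ w
    have hCQ : ∀ w, C *ᵥ (Q *ᵥ w) = Matrix.fromBlocks C₁ C₂ 0 0 *ᵥ w := by
      intro w; rw [hC]; exact hcollapse _ w
    have hDalt : D = B₁ + C₁ * NormedSpace.exp (T • J) := by
      rw [hD, Matrix.mul_assoc, mul_expInt_eq, Matrix.mul_sub, Matrix.mul_one]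
      abel
    have hdsub : d₁ - dt = C₁ *ᵥ If - B₂ *ᵥ S₀ - C₂ *ᵥ ST := by
      rw [hdt]; abel
    have key : B₁ *ᵥ a + B₂ *ᵥ (-S₀)
        + (C₁ *ᵥ (NormedSpace.exp (T • J) *ᵥ a + If) + C₂ *ᵥ (-ST))
        = D *ᵥ a + (d₁ - dt) := by
      rw [hdsub, hDalt, Matrix.add_mulVec, ← Matrix.mulVec_mulVec,
        Matrix.mulVec_add, Matrix.mulVec_neg, Matrix.mulVec_neg]
      abel
    rw [hBQ, hCQ, Matrix.fromBlocks_mulVec, Matrix.fromBlocks_mulVec]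
    funext z
    cases z with
    | inr j =>
      simp [Matrix.zero_mulVec]
    | inl i =>
      have h := congrFun key i
      simp only [Sum.elim_inl, Sum.elim_comp_inl, Sum.elim_comp_inr, Pi.add_apply,
        Pi.neg_apply] at h ⊢
      simpa using h
  have hxeq : ∀ u ∈ Icc (0:ℝ) T, xsol u = Q *ᵥ Sum.elim (Yfun J g₁ μ₁ u) (Y₂ u) := by
    intro u hu; rw [hxsol]; simp only []; rw [hsol_eq u hu]
  constructor
  · constructor
    · -- existence of the derivative function v
      refine ⟨fun t => Q *ᵥ Sum.elim (J *ᵥ Yfun J g₁ μ₁ t + g₁ t) (Y₂' t), ?_, ?_, ?_⟩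
      · -- continuity of v
        apply continuousOn_matvec (M := fun _ => Q) (fun i j => continuousOn_const)
        apply continuousOn_pi.2
        intro z
        have hY₁cont : Continuous (Yfun J g₁ μ₁) := continuous_Y J g₁ μ₁ hg₁c
        have hF : ContinuousOn (fun t => J *ᵥ Yfun J g₁ μ₁ t + g₁ t) (Icc 0 T) :=
          ContinuousOn.add
            (continuousOn_matvec (M := fun _ => J) (c := Yfun J g₁ μ₁)
              (fun i j => continuousOn_const) hY₁cont.continuousOn)
            hg₁c.continuousOn
        have hG : ContinuousOn Y₂' (Icc 0 T) := by
          rw [hY₂'def]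
          apply ContinuousOn.neg
          apply continuousOn_finset_sum
          intro i hi
          exact continuousOn_matvec (M := fun _ => N ^ i)
            (c := iteratedDerivWithin (i+1) f₂ (Icc 0 T)) (fun a b => continuousOn_const)
            (iterDeriv_cont hT hf₂c (Finset.mem_range.1 hi))
        cases z with
        | inl i => exact (continuous_apply i).comp_continuousOn hF
        | inr j => exact (continuous_apply j).comp_continuousOn hG
      · -- differentiability of xsol
        intro t ht
        have hder : HasDerivWithinAt (fun u => Q *ᵥ Sum.elim (Yfun J g₁ μ₁ u) (Y₂ u))
            (Q *ᵥ Sum.elim (J *ᵥ Yfun J g₁ μ₁ t + g₁ t) (Y₂' t)) (Icc 0 T) t := by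
          apply hasDerivWithinAt_const_matvec
          rw [hasDerivWithinAt_pi]
          intro z
          cases z with
          | inl i =>
            exact (hasDerivWithinAt_pi.1
              ((hasDerivAt_Y J g₁ μ₁ hg₁c t).hasDerivWithinAt)) i
          | inr j =>
            exact (hasDerivWithinAt_pi.1 (hY₂deriv t ht)) j
        exact hder.congr hxeq (hxeq t ht)
      · -- the DAE on the open interval
        intro t ht
        have ht' : t ∈ Icc (0:ℝ) T := Ioo_subset_Icc_self ht
        apply mulVec_inj hP
        have hL : P *ᵥ (E *ᵥ (Q *ᵥ Sum.elim (J *ᵥ Yfun J g₁ μ₁ t + g₁ t) (Y₂' t)))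
            = Sum.elim (J *ᵥ Yfun J g₁ μ₁ t + g₁ t) (N *ᵥ Y₂' t) := by
          rw [Matrix.mulVec_mulVec, hPE, hcollapse, Matrix.fromBlocks_mulVec]
          funext z
          cases z <;>
            simp [Matrix.one_mulVec, Matrix.zero_mulVec]
        have hR : P *ᵥ (A *ᵥ xsol t + f t)
            = Sum.elim (J *ᵥ Yfun J g₁ μ₁ t + f₁ t) (Y₂ t + f₂ t) := by
          rw [Matrix.mulVec_add, Matrix.mulVec_mulVec, hPA, hxeq t ht', hcollapse, hPf,
            Matrix.fromBlocks_mulVec]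
          funext z
          cases z <;>
            simp [Matrix.one_mulVec, Matrix.zero_mulVec]
        rw [hL, hR]
        have hnil : N *ᵥ Y₂' t = Y₂ t + f₂ t := by
          rw [hY₂'def, hY₂def]
          have h := nilp_sum_step N hN (fun i => iteratedDerivWithin i f₂ (Icc 0 T) t)
          rw [iteratedDerivWithin_zero] at h
          exact h
        rw [hnil, hg₁eq t ht']
    · -- boundary condition for xsol
      have h0 : (0:ℝ) ∈ Icc (0:ℝ) T := left_mem_Icc.2 hT.le
      have hTm : T ∈ Icc (0:ℝ) T := right_mem_Icc.2 hT.le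
      have hY₁T : Yfun J g₁ μ₁ T = NormedSpace.exp (T • J) *ᵥ μ₁ + If := by
        rw [Yfun_eq J g₁ μ₁ hg₁c T, hIfdef, hIcongr T hTm]
      rw [hxeq 0 h0, hxeq T hTm, hY₁T, Yfun_zero, hY₂0, hY₂T, hBC μ₁, hd]
      have hDμ : D *ᵥ μ₁ = dt := by
        rw [hμ₁def, Matrix.mulVec_mulVec, hDD, Matrix.one_mulVec]
      rw [hDμ]
      have hfin : dt + (d₁ - dt) = d₁ := by abel
      rw [hfin]
  · -- uniqueness
    intro x x' hx hx'c hode hbc t ht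
    have h0m : (0:ℝ) ∈ Icc (0:ℝ) T := left_mem_Icc.2 hT.le
    have hTm' : T ∈ Icc (0:ℝ) T := right_mem_Icc.2 hT.le
    set y₁ : ℝ → Fin n₁ → ℝ := fun u i => (Q⁻¹ *ᵥ x u) (Sum.inl i) with hy₁def
    set y₂ : ℝ → Fin n₂ → ℝ := fun u j => (Q⁻¹ *ᵥ x u) (Sum.inr j) with hy₂def
    set z₁ : ℝ → Fin n₁ → ℝ := fun u i => (Q⁻¹ *ᵥ x' u) (Sum.inl i) with hz₁def
    set z₂ : ℝ → Fin n₂ → ℝ := fun u j => (Q⁻¹ *ᵥ x' u) (Sum.inr j) with hz₂def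
    have hysum : ∀ u, Q⁻¹ *ᵥ x u = Sum.elim (y₁ u) (y₂ u) := by
      intro u; funext w; cases w <;> rfl
    have hzsum : ∀ u, Q⁻¹ *ᵥ x' u = Sum.elim (z₁ u) (z₂ u) := by
      intro u; funext w; cases w <;> rfl
    have hxy : ∀ u, x u = Q *ᵥ Sum.elim (y₁ u) (y₂ u) := by
      intro u; rw [← hysum u, Matrix.mulVec_mulVec, hQQ, Matrix.one_mulVec]
    have hx'y : ∀ u, x' u = Q *ᵥ Sum.elim (z₁ u) (z₂ u) := by
      intro u; rw [← hzsum u, Matrix.mulVec_mulVec, hQQ, Matrix.one_mulVec]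
    have hyD : ∀ u ∈ Icc (0:ℝ) T, HasDerivWithinAt (fun r => Q⁻¹ *ᵥ x r)
        (Q⁻¹ *ᵥ x' u) (Icc 0 T) u :=
      fun u hu => hasDerivWithinAt_const_matvec _ (hx u hu)
    have hy₁D : ∀ u ∈ Icc (0:ℝ) T, HasDerivWithinAt y₁ (z₁ u) (Icc 0 T) u := by
      intro u hu
      apply hasDerivWithinAt_pi.2
      intro i
      exact (hasDerivWithinAt_pi.1 (hyD u hu)) (Sum.inl i)
    have hy₂D : ∀ u ∈ Icc (0:ℝ) T, HasDerivWithinAt y₂ (z₂ u) (Icc 0 T) u := by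
      intro u hu
      apply hasDerivWithinAt_pi.2
      intro j
      exact (hasDerivWithinAt_pi.1 (hyD u hu)) (Sum.inr j)
    have hy₁c : ContinuousOn y₁ (Icc 0 T) := fun u hu => (hy₁D u hu).continuousWithinAt
    have hz₁c : ContinuousOn z₁ (Icc 0 T) := by
      apply continuousOn_pi.2
      intro i
      have hQx' : ContinuousOn (fun u => Q⁻¹ *ᵥ x' u) (Icc 0 T) :=
        continuousOn_matvec (M := fun _ => Q⁻¹) (c := x') (fun a b => continuousOn_const) hx'c
      exact (continuous_apply (Sum.inl i)).comp_continuousOn hQx'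
    -- block equations
    have hPEx : ∀ u, P *ᵥ (E *ᵥ x' u) = Sum.elim (z₁ u) (N *ᵥ z₂ u) := by
      intro u
      rw [Matrix.mulVec_mulVec, hPE, hx'y u, hcollapse, Matrix.fromBlocks_mulVec]
      funext w; cases w <;> simp [Matrix.one_mulVec, Matrix.zero_mulVec]
    have hPAx : ∀ u, P *ᵥ (A *ᵥ x u + f u) = Sum.elim (J *ᵥ y₁ u + f₁ u) (y₂ u + f₂ u) := by
      intro u
      rw [Matrix.mulVec_add, Matrix.mulVec_mulVec, hPA, hxy u, hcollapse, hPf,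
        Matrix.fromBlocks_mulVec]
      funext w; cases w <;> simp [Matrix.one_mulVec, Matrix.zero_mulVec]
    have hode1 : ∀ u ∈ Ioo (0:ℝ) T, z₁ u = J *ᵥ y₁ u + f₁ u := by
      intro u hu
      have h := congrArg (fun w => P *ᵥ w) (hode u hu)
      rw [hPEx u, hPAx u] at h
      funext i; exact congrFun h (Sum.inl i)
    have hode2 : ∀ u ∈ Ioo (0:ℝ) T, N *ᵥ z₂ u = y₂ u + f₂ u := by
      intro u hu
      have h := congrArg (fun w => P *ᵥ w) (hode u hu)
      rw [hPEx u, hPAx u] at h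
      funext j; exact congrFun h (Sum.inr j)
    -- nilpotent part
    have hy₂eq : ∀ u ∈ Icc (0:ℝ) T, y₂ u = Y₂ u := by
      intro u hu
      rw [nilp_unique N hN hT hf₂c hy₂D hode2 u hu, hY₂def]
    -- extend the first block ODE to the closed interval
    have hode1' : ∀ u ∈ Icc (0:ℝ) T, z₁ u = J *ᵥ y₁ u + f₁ u := by
      have hR : ContinuousOn (fun u => J *ᵥ y₁ u + f₁ u) (Icc 0 T) :=
        ContinuousOn.add (continuousOn_matvec (M := fun _ => J) (c := y₁)
          (fun a b => continuousOn_const) hy₁c) hf₁c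
      exact fun u hu => EqOn.of_subset_closure (fun r hr => hode1 r hr) hz₁c hR
        Ioo_subset_Icc_self (le_of_eq (closure_Ioo hT.ne).symm) hu
    -- variation of constants via FTC
    have hwc : ContinuousOn (fun u => NormedSpace.exp ((0 - u) • J) *ᵥ y₁ u) (Icc 0 T) :=
      continuousOn_matvec (M := fun u => NormedSpace.exp ((0 - u) • J)) (c := y₁)
        (fun i j => (continuous_expM_entry_shift J 0 i j).continuousOn) hy₁c
    have hwD : ∀ u ∈ Ioo (0:ℝ) T, HasDerivWithinAt
        (fun r => NormedSpace.exp ((0 - r) • J) *ᵥ y₁ r)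
        (NormedSpace.exp ((0 - u) • J) *ᵥ g₁ u) (Ioi u) u := by
      intro u hu
      have hu' : u ∈ Icc (0:ℝ) T := Ioo_subset_Icc_self hu
      have hM : ∀ i j, HasDerivWithinAt (fun s : ℝ => NormedSpace.exp ((0 - s) • J) i j)
          ((-(NormedSpace.exp ((0 - u) • J) * J)) i j) (Icc 0 T) u :=
        fun i j => (hasDerivAt_expM_entry_shift J 0 u i j).hasDerivWithinAt
      have h := hasDerivWithinAt_matvec
        (M' := -(NormedSpace.exp ((0 - u) • J) * J)) hM (hy₁D u hu')
      have hval : (-(NormedSpace.exp ((0 - u) • J) * J)) *ᵥ y₁ u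
          + NormedSpace.exp ((0 - u) • J) *ᵥ z₁ u
          = NormedSpace.exp ((0 - u) • J) *ᵥ g₁ u := by
        rw [hode1' u hu', hg₁eq u hu', Matrix.mulVec_add, Matrix.mulVec_mulVec,
          Matrix.neg_mulVec]
        abel
      rw [hval] at h
      exact (h.hasDerivAt (Icc_mem_nhds hu.1 hu.2)).hasDerivWithinAt
    have hFTC := intervalIntegral.integral_eq_sub_of_hasDeriv_right_of_le hT.le hwc hwD
      ((continuous_integrandW J g₁ hg₁c).intervalIntegrable 0 T)
    have hy₁T : y₁ T = NormedSpace.exp (T • J) *ᵥ y₁ 0 + If := by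
      have hftc2 : (∫ s in (0:ℝ)..T, NormedSpace.exp ((0 - s) • J) *ᵥ g₁ s)
          = NormedSpace.exp ((0 - T) • J) *ᵥ y₁ T - y₁ 0 := by
        rw [hFTC]
        have hw0 : NormedSpace.exp (((0:ℝ) - 0) • J) *ᵥ y₁ 0 = y₁ 0 := by
          rw [sub_self, expM_zero, Matrix.one_mulVec]
        rw [hw0]
      have h1 : Wfun J g₁ T = NormedSpace.exp ((0 - T) • J) *ᵥ y₁ T - y₁ 0 := by
        unfold Wfun
        exact hftc2
      have h2 := congrArg (fun z => NormedSpace.exp (T • J) *ᵥ z) h1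
      simp only [Matrix.mulVec_sub, Matrix.mulVec_mulVec] at h2
      rw [← expM_add, show T + (0 - T) = 0 from by ring, expM_zero,
        Matrix.one_mulVec] at h2
      have h3 : NormedSpace.exp (T • J) *ᵥ Wfun J g₁ T = If := by
        have h4 := Yfun_eq J g₁ 0 hg₁c T
        simp only [Yfun, zero_add, Matrix.mulVec_zero] at h4
        rw [hIfdef, hIcongr T hTm']
        exact h4
      rw [h3] at h2
      rw [h2]
      abel
    -- boundary condition determines the initial value
    have e0 : x 0 = Q *ᵥ Sum.elim (y₁ 0) (-S₀) := by
      rw [hxy 0, hy₂eq 0 h0m, hY₂0]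
    have eT : x T = Q *ᵥ Sum.elim (NormedSpace.exp (T • J) *ᵥ y₁ 0 + If) (-ST) := by
      rw [hxy T, hy₂eq T hTm', hY₂T, hy₁T]
    rw [e0, eT, hBC (y₁ 0), hd] at hbc
    have hDy : D *ᵥ y₁ 0 = dt := by
      have h5 : D *ᵥ y₁ 0 + (d₁ - dt) = d₁ := funext fun i => congrFun hbc (Sum.inl i)
      rw [eq_sub_of_add_eq h5]
      abel
    have hy₁0 : y₁ 0 = μ₁ := by
      apply mulVec_inj hDdet
      rw [hDy, hμ₁def, Matrix.mulVec_mulVec, hDD, Matrix.one_mulVec]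
    -- uniqueness of the first block via the linear ODE
    have hy₁Ici : ∀ u ∈ Ico (0:ℝ) T, HasDerivWithinAt y₁ (J *ᵥ y₁ u + g₁ u) (Ici u) u := by
      intro u hu
      have hu' : u ∈ Icc (0:ℝ) T := Ico_subset_Icc_self hu
      have h := (hy₁D u hu').mono_of_mem_nhdsWithin (Icc_mem_nhdsGE_of_mem ⟨hu.1, hu.2⟩)
      have heq : z₁ u = J *ᵥ y₁ u + g₁ u := by rw [hode1' u hu', hg₁eq u hu']
      rw [heq] at h
      exact h
    have hY₁Ici : ∀ u ∈ Ico (0:ℝ) T, HasDerivWithinAt (Yfun J g₁ μ₁)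
        (J *ᵥ Yfun J g₁ μ₁ u + g₁ u) (Ici u) u :=
      fun u _ => (hasDerivAt_Y J g₁ μ₁ hg₁c u).hasDerivWithinAt
    have huniq : EqOn y₁ (Yfun J g₁ μ₁) (Icc 0 T) :=
      linear_ode_unique J hy₁c hy₁Ici ((continuous_Y J g₁ μ₁ hg₁c).continuousOn) hY₁Ici
        (by rw [hy₁0, Yfun_zero])
    calc x t = Q *ᵥ Sum.elim (y₁ t) (y₂ t) := hxy t
      _ = Q *ᵥ Sum.elim (Yfun J g₁ μ₁ t) (Y₂ t) := by rw [huniq ht, hy₂eq t ht]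
      _ = xsol t := (hxeq t ht).symm
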